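/- If Φ : Mₘ(ℂ) → Mₙ(ℂ) is a positive linear map and X, Y are positive definite matrices with Φ(X) and Φ(X+Y) invertible, then Φ(X(X+Y)⁻¹X) ≥ Φ(X)Φ(X+Y)⁻¹Φ(X) in the Loewner order. -/

import Mathlib

open Matrix ComplexOrder

private lemma sum_mulVec' {n : ℕ} {ι : Type*} (s : Finset ι) (A : ι → Matrix (Fin n) (Fin n) ℂ)
    (x : Fin n → ℂ) : (∑ i ∈ s, A i) *ᵥ x = ∑ i ∈ s, A i *ᵥ x := by
  ext j
  simp only [Matrix.mulVec, dotProduct, Matrix.sum_apply, Finset.sum_apply, Finset.sum_mul]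
  rw [Finset.sum_comm]

private lemma dotProduct_sum' {n : ℕ} {ι : Type*} (s : Finset ι) (v : Fin n → ℂ)
    (w : ι → Fin n → ℂ) : v ⬝ᵥ (∑ i ∈ s, w i) = ∑ i ∈ s, v ⬝ᵥ w i := by
  simp only [dotProduct, Finset.mul_sum, Finset.sum_apply]
  rw [Finset.sum_comm]

private lemma core_ineq {m n : ℕ} (Q : Fin m → Matrix (Fin n) (Fin n) ℂ)
    (hQ : ∀ i, (Q i).PosSemidef) (d : Fin m → ℝ) (hd : ∀ i, 0 < d i)
    (hB : IsUnit (∑ i, (d i : ℂ) • Q i)) :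
    ((∑ i, ((d i : ℂ)⁻¹) • Q i)
      - (∑ i, Q i) * (∑ i, (d i : ℂ) • Q i)⁻¹ * (∑ i, Q i)).PosSemidef := by
  set B := ∑ i, (d i : ℂ) • Q i with hBdef
  set E := ∑ i, Q i with hEdef
  set D := ∑ i, ((d i : ℂ)⁻¹) • Q i with hDdef
  have hQH : ∀ i, (Q i)ᴴ = Q i := fun i => (hQ i).1
  have hBH : Bᴴ = B := by
    rw [hBdef, conjTranspose_sum]
    refine Finset.sum_congr rfl fun i _ => ?_
    rw [conjTranspose_smul, hQH]
    congr 1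
    simp [Complex.star_def, Complex.conj_ofReal]
  have hEH : Eᴴ = E := by
    rw [hEdef, conjTranspose_sum]
    exact Finset.sum_congr rfl fun i _ => hQH i
  have hDH : Dᴴ = D := by
    rw [hDdef, conjTranspose_sum]
    refine Finset.sum_congr rfl fun i _ => ?_
    rw [conjTranspose_smul, hQH]
    congr 1
    rw [← Complex.ofReal_inv]
    simp [Complex.star_def, Complex.conj_ofReal]
  have hdet : IsUnit B.det := (Matrix.isUnit_iff_isUnit_det B).mp hB
  have hBiH : (B⁻¹)ᴴ = B⁻¹ := by rw [Matrix.conjTranspose_nonsing_inv, hBH]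
  refine Matrix.PosSemidef.of_dotProduct_mulVec_nonneg ?_ ?_
  · show (D - E * B⁻¹ * E)ᴴ = _
    rw [conjTranspose_sub, conjTranspose_mul, conjTranspose_mul, hEH, hBiH, hDH, Matrix.mul_assoc]
  · intro x
    set w : Fin n → ℂ := (B⁻¹ * E) *ᵥ x with hw
    have hBw : B *ᵥ w = E *ᵥ x := by
      rw [hw, Matrix.mulVec_mulVec, Matrix.mul_nonsing_inv_cancel_left _ _ hdet]
    set a : Fin m → Fin n → ℂ := fun i => x - (d i : ℂ) • w with ha
    have hkey : ∀ i, ((d i : ℂ)⁻¹) * (star (a i) ⬝ᵥ (Q i) *ᵥ (a i))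
        = ((d i : ℂ)⁻¹) * (star x ⬝ᵥ (Q i) *ᵥ x) - star x ⬝ᵥ (Q i) *ᵥ w
          - star w ⬝ᵥ (Q i) *ᵥ x + (d i : ℂ) * (star w ⬝ᵥ (Q i) *ᵥ w) := by
      intro i
      have hd0 : (d i : ℂ) ≠ 0 := by
        exact_mod_cast (hd i).ne'
      have hexp : star (a i) ⬝ᵥ (Q i) *ᵥ (a i)
          = star x ⬝ᵥ (Q i) *ᵥ x - (d i : ℂ) * (star x ⬝ᵥ (Q i) *ᵥ w)
            - (d i : ℂ) * (star w ⬝ᵥ (Q i) *ᵥ x)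
            + (d i : ℂ) * (d i : ℂ) * (star w ⬝ᵥ (Q i) *ᵥ w) := by
        simp only [ha, star_sub, star_smul, sub_dotProduct, dotProduct_sub,
          smul_dotProduct, dotProduct_smul, Matrix.mulVec_smul, Matrix.mulVec_sub,
          smul_eq_mul, RCLike.star_def, Complex.conj_ofReal]
        ring
      rw [hexp]
      field_simp
    have hnn : ∀ i, (0:ℂ) ≤ ((d i : ℂ)⁻¹) * (star (a i) ⬝ᵥ (Q i) *ᵥ (a i)) := by
      intro i
      apply mul_nonneg _ ((hQ i).dotProduct_mulVec_nonneg (a i))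
      rw [← Complex.ofReal_inv]
      exact_mod_cast (inv_pos.mpr (hd i)).le
    have hsum : (0:ℂ) ≤ ∑ i, ((d i : ℂ)⁻¹) * (star (a i) ⬝ᵥ (Q i) *ᵥ (a i)) :=
      Finset.sum_nonneg fun i _ => hnn i
    have hEx : star w ⬝ᵥ E *ᵥ x = ∑ i, star w ⬝ᵥ (Q i) *ᵥ x := by
      rw [hEdef, sum_mulVec', dotProduct_sum']
    have hBw2 : star w ⬝ᵥ B *ᵥ w = ∑ i, (d i : ℂ) * (star w ⬝ᵥ (Q i) *ᵥ w) := by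
      rw [hBdef, sum_mulVec', dotProduct_sum']
      refine Finset.sum_congr rfl fun i _ => ?_
      rw [Matrix.smul_mulVec, dotProduct_smul, smul_eq_mul]
    have hDx : star x ⬝ᵥ D *ᵥ x = ∑ i, ((d i : ℂ)⁻¹) * (star x ⬝ᵥ (Q i) *ᵥ x) := by
      rw [hDdef, sum_mulVec', dotProduct_sum']
      refine Finset.sum_congr rfl fun i _ => ?_
      rw [Matrix.smul_mulVec, dotProduct_smul, smul_eq_mul]
    have hEw : star x ⬝ᵥ E *ᵥ w = ∑ i, star x ⬝ᵥ (Q i) *ᵥ w := by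
      rw [hEdef, sum_mulVec', dotProduct_sum']
    have hcalc : ∑ i, ((d i : ℂ)⁻¹) * (star (a i) ⬝ᵥ (Q i) *ᵥ (a i))
        = star x ⬝ᵥ D *ᵥ x - star x ⬝ᵥ E *ᵥ w := by
      calc ∑ i, ((d i : ℂ)⁻¹) * (star (a i) ⬝ᵥ (Q i) *ᵥ (a i))
          = ∑ i, (((d i : ℂ)⁻¹) * (star x ⬝ᵥ (Q i) *ᵥ x) - star x ⬝ᵥ (Q i) *ᵥ w
              - star w ⬝ᵥ (Q i) *ᵥ x + (d i : ℂ) * (star w ⬝ᵥ (Q i) *ᵥ w)) :=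
            Finset.sum_congr rfl fun i _ => hkey i
        _ = (∑ i, ((d i : ℂ)⁻¹) * (star x ⬝ᵥ (Q i) *ᵥ x)) - (∑ i, star x ⬝ᵥ (Q i) *ᵥ w)
              - (∑ i, star w ⬝ᵥ (Q i) *ᵥ x) + ∑ i, (d i : ℂ) * (star w ⬝ᵥ (Q i) *ᵥ w) := by
            rw [Finset.sum_add_distrib, Finset.sum_sub_distrib, Finset.sum_sub_distrib]
        _ = star x ⬝ᵥ D *ᵥ x - star x ⬝ᵥ E *ᵥ w - star w ⬝ᵥ B *ᵥ w + star w ⬝ᵥ B *ᵥ w := by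
            rw [← hDx, ← hEw, ← hBw2, hBw, ← hEx]
        _ = star x ⬝ᵥ D *ᵥ x - star x ⬝ᵥ E *ᵥ w := by ring
    have hgoal : star x ⬝ᵥ (D - E * B⁻¹ * E) *ᵥ x = star x ⬝ᵥ D *ᵥ x - star x ⬝ᵥ E *ᵥ w := by
      rw [Matrix.sub_mulVec, dotProduct_sub]
      congr 1
      rw [hw, Matrix.mulVec_mulVec, Matrix.mul_assoc]
    rw [hgoal, ← hcalc]
    exact hsum

private lemma stdBasis_diag {m : ℕ} (i : Fin m) :
    single i i (1:ℂ) = diagonal (Pi.single i 1) := by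
  ext a b
  simp only [Matrix.single, diagonal_apply, Pi.single_apply, Matrix.of_apply]
  split_ifs with h1 h2 h3 <;> aesop

private lemma diag_eq_sum {m : ℕ} (c : Fin m → ℂ) :
    diagonal c = ∑ i, c i • single i i (1:ℂ) := by
  ext a b
  simp only [diagonal_apply, Matrix.sum_apply, Matrix.smul_apply, Matrix.single,
    Matrix.of_apply, smul_eq_mul, mul_ite, mul_one, mul_zero]
  rw [Finset.sum_eq_single a] <;> aesop

private lemma posdef_conj {k : ℕ} {A B : Matrix (Fin k) (Fin k) ℂ} (hA : A.PosDef)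
    (hB : IsUnit B.det) : (Bᴴ * A * B).PosDef := by
  refine Matrix.PosDef.of_dotProduct_mulVec_pos ?_ ?_
  · exact isHermitian_conjTranspose_mul_mul B hA.1
  · intro x hx
    have hBx : B *ᵥ x ≠ 0 := by
      intro h
      apply hx
      have : B⁻¹ *ᵥ (B *ᵥ x) = x := by
        rw [Matrix.mulVec_mulVec, Matrix.nonsing_inv_mul _ hB, Matrix.one_mulVec]
      rw [h, Matrix.mulVec_zero] at this
      exact this.symm
    have := hA.dotProduct_mulVec_pos hBx
    simpa only [star_mulVec, dotProduct_mulVec, vecMul_vecMul] using this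

private lemma exists_decomp {m : ℕ} (X Y : Matrix (Fin m) (Fin m) ℂ)
    (hX : X.PosDef) (hY : Y.PosDef) :
    ∃ (V : Matrix (Fin m) (Fin m) ℂ) (d : Fin m → ℝ), (∀ i, 0 < d i) ∧
      X = V * Vᴴ ∧ X + Y = V * diagonal (fun i => (d i : ℂ)) * Vᴴ ∧
      X * (X + Y)⁻¹ * X = V * diagonal (fun i => ((d i : ℂ))⁻¹) * Vᴴ := by
  classical
  have hXps := hX.posSemidef
  have hCex : ∃ C : Matrix (Fin m) (Fin m) ℂ, C.PosSemidef ∧ C * C = X := by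
    open MatrixOrder in
    exact ⟨CFC.sqrt X, (CFC.sqrt_nonneg X).posSemidef, CFC.sqrt_mul_sqrt_self X hXps.nonneg⟩
  obtain ⟨C, hCps, hCC⟩ := hCex
  have hCH : Cᴴ = C := hCps.1
  have hCd : IsUnit C.det := by
    have h : IsUnit (C.det * C.det) := by
      rw [← Matrix.det_mul, hCC]
      exact (Matrix.isUnit_iff_isUnit_det X).mp hX.isUnit
    exact isUnit_of_mul_isUnit_left h
  have hCiH : (C⁻¹)ᴴ = C⁻¹ := by rw [Matrix.conjTranspose_nonsing_inv, hCH]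
  have hXY : (X + Y).PosDef := hX.add hY
  have hM : (C⁻¹ * (X + Y) * C⁻¹).PosDef := by
    have h := posdef_conj hXY (Matrix.isUnit_nonsing_inv_det C hCd)
    rwa [hCiH] at h
  have hMH : (C⁻¹ * (X + Y) * C⁻¹).IsHermitian := hM.1
  set d : Fin m → ℝ := hMH.eigenvalues with hddef
  have hd : ∀ i, 0 < d i := fun i => hM.eigenvalues_pos i
  set U : Matrix (Fin m) (Fin m) ℂ := (hMH.eigenvectorUnitary : Matrix (Fin m) (Fin m) ℂ)
    with hUdef
  have hspec : C⁻¹ * (X + Y) * C⁻¹ = U * diagonal (fun i => (d i : ℂ)) * star U :=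
    hMH.spectral_theorem
  have hU1 : U * star U = 1 := Matrix.mem_unitaryGroup_iff.mp hMH.eigenvectorUnitary.2
  have hU2 : star U * U = 1 := Matrix.mem_unitaryGroup_iff'.mp hMH.eigenvectorUnitary.2
  clear_value U d
  have hUd : IsUnit U.det := by
    refine IsUnit.of_mul_eq_one (a := U.det) (star U).det ?_
    rw [← Matrix.det_mul, hU1, Matrix.det_one]
  set V := C * U with hVdef
  have hVH : Vᴴ = star U * C := by
    rw [hVdef, conjTranspose_mul, hCH, Matrix.star_eq_conjTranspose]
  have hdetV : IsUnit V.det := by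
    rw [hVdef, Matrix.det_mul]
    exact hCd.mul hUd
  have hdetVH : IsUnit Vᴴ.det := by
    rw [Matrix.det_conjTranspose]
    exact hdetV.star
  have hXeq : X = V * Vᴴ := by
    rw [hVdef, hVH, Matrix.mul_assoc, ← Matrix.mul_assoc U (star U) C, hU1, Matrix.one_mul, hCC]
  have hXYeq : X + Y = V * diagonal (fun i => (d i : ℂ)) * Vᴴ := by
    have hXYc : C * (C⁻¹ * (X + Y) * C⁻¹) * C = X + Y := by
      simp only [← Matrix.mul_assoc]
      rw [Matrix.mul_nonsing_inv _ hCd, Matrix.one_mul, Matrix.nonsing_inv_mul_cancel_right _ _ hCd]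
    rw [← hXYc, hspec, hVdef, hVH]
    simp only [Matrix.mul_assoc]
  have hd0 : ∀ i, ((d i : ℂ)) ≠ 0 := fun i => by exact_mod_cast (hd i).ne'
  have hdiagmul : diagonal (fun i => (d i : ℂ)) * diagonal (fun i => ((d i : ℂ))⁻¹) = 1 := by
    rw [Matrix.diagonal_mul_diagonal]
    rw [show (fun i => (d i : ℂ) * ((d i : ℂ))⁻¹) = fun _ => (1:ℂ) from
      funext fun i => mul_inv_cancel₀ (hd0 i)]
    exact Matrix.diagonal_one
  have hinv : (X + Y)⁻¹ = Vᴴ⁻¹ * diagonal (fun i => ((d i : ℂ))⁻¹) * V⁻¹ := by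
    apply Matrix.inv_eq_right_inv
    rw [hXYeq]
    simp only [Matrix.mul_assoc]
    rw [Matrix.mul_nonsing_inv_cancel_left _ _ hdetVH,
      ← Matrix.mul_assoc (diagonal fun i => (d i : ℂ)), hdiagmul, Matrix.one_mul,
      Matrix.mul_nonsing_inv _ hdetV]
  have hmid : X * (X + Y)⁻¹ * X = V * diagonal (fun i => ((d i : ℂ))⁻¹) * Vᴴ := by
    rw [hinv, hXeq]
    simp only [Matrix.mul_assoc]
    rw [Matrix.mul_nonsing_inv_cancel_left _ _ hdetVH, Matrix.nonsing_inv_mul_cancel_left _ _ hdetV]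
  exact ⟨V, d, hd, hXeq, hXYeq, hmid⟩


/-- For a positive linear map `Φ` and positive definite `X, Y` with `Φ(X)` and
`Φ(X+Y)` invertible, `Φ(X(X+Y)⁻¹X) ≥ Φ(X)Φ(X+Y)⁻¹Φ(X)` in the Loewner order. -/
theorem posMap_schur_ineq {m n : ℕ}
    (Φ : Matrix (Fin m) (Fin m) ℂ →ₗ[ℂ] Matrix (Fin n) (Fin n) ℂ)
    (hΦ : ∀ A : Matrix (Fin m) (Fin m) ℂ, A.PosSemidef → (Φ A).PosSemidef)
    (X Y : Matrix (Fin m) (Fin m) ℂ) (hX : X.PosDef) (hY : Y.PosDef)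
    (h1 : IsUnit (Φ X)) (h2 : IsUnit (Φ (X + Y))) :
    (Φ (X * (X + Y)⁻¹ * X) - Φ X * (Φ (X + Y))⁻¹ * Φ X).PosSemidef := by
  classical
  obtain ⟨V, d, hd, hXeq, hXYeq, hmid⟩ := exists_decomp X Y hX hY
  set Q : Fin m → Matrix (Fin n) (Fin n) ℂ :=
    fun i => Φ (V * single i i 1 * Vᴴ) with hQdef
  have hQps : ∀ i, (Q i).PosSemidef := by
    intro i
    apply hΦ
    rw [stdBasis_diag]
    refine (Matrix.PosSemidef.diagonal ?_).mul_mul_conjTranspose_same V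
    intro j
    simp only [Pi.single_apply, Pi.zero_apply]
    split_ifs
    · exact zero_le_one
    · exact le_refl 0
  have hΦdiag : ∀ c : Fin m → ℂ, Φ (V * diagonal c * Vᴴ) = ∑ i, c i • Q i := by
    intro c
    rw [diag_eq_sum c]
    simp only [Finset.mul_sum, Finset.sum_mul, Matrix.mul_smul, Matrix.smul_mul]
    rw [map_sum]
    simp only [_root_.map_smul]
    rfl
  have hX1 : Φ X = ∑ i, Q i := by
    have h : X = V * diagonal (fun _ => (1:ℂ)) * Vᴴ := by
      rw [show diagonal (fun _ => (1:ℂ)) = (1 : Matrix (Fin m) (Fin m) ℂ) from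
        Matrix.diagonal_one, Matrix.mul_one]
      exact hXeq
    rw [h, hΦdiag]
    simp only [one_smul]
  have hXY1 : Φ (X + Y) = ∑ i, (d i : ℂ) • Q i := by rw [hXYeq, hΦdiag]
  have hmid1 : Φ (X * (X + Y)⁻¹ * X) = ∑ i, ((d i : ℂ))⁻¹ • Q i := by rw [hmid, hΦdiag]
  rw [hX1, hXY1, hmid1]
  exact core_ineq Q hQps d hd (hXY1 ▸ h2)
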